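/- Let S be a numerical semigroup with multiplicity e = m(S) and let x∈S be nonzero. If ord_S(x + jx) = ord_S(x) + ord_S(jx) for every j with 1 ≤ j ≤ e−1 (i.e. the initial form (t^x)* is a non-zero-divisor on the initial forms (t^{jx})* in the tangent cone), then x = ord_S(x)·e. -/
import Mathlib


open scoped Pointwise

/-- `S ⊆ ℕ` is a numerical semigroup: it contains `0`, is closed under
addition, and has finite complement in `ℕ`. -/
def IsNumSgp (S : Set ℕ) : Prop :=
  (0 : ℕ) ∈ S ∧ (∀ a ∈ S, ∀ b ∈ S, a + b ∈ S) ∧ {x : ℕ | x ∉ S}.Finite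

/-- `nM S t` is the `t`-fold sumset of the maximal ideal `M = S \ {0}`,
with the convention `nM S 0 = S`. -/
def nM (S : Set ℕ) : ℕ → Set ℕ
  | 0 => S
  | t + 1 => (S \ {0}) + nM S t

/-- the order of `s` with respect to `S` : the largest `t` with `s ∈ tM`. -/
noncomputable def ordS (S : Set ℕ) (s : ℕ) : ℕ := sSup {t : ℕ | s ∈ nM S t}

/-- the multiplicity of `S` : its least nonzero element. -/
noncomputable def mult (S : Set ℕ) : ℕ := sInf {x : ℕ | x ∈ S ∧ x ≠ 0}

/-- the Apéry set of `S` with respect to `x` : elements `s ∈ S` with `s - x ∉ S`. -/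
def Ap (S : Set ℕ) (x : ℕ) : Set ℕ := {s : ℕ | s ∈ S ∧ ¬ ∃ t ∈ S, s = t + x}

/-- membership of an integer in (the image in `ℤ` of) `S`. -/
def zmem (S : Set ℕ) (z : ℤ) : Prop := ∃ t ∈ S, (t : ℤ) = z

/-- the Frobenius number of `S` : the largest integer not in `S`. -/
noncomputable def Frob (S : Set ℕ) : ℤ := sSup {z : ℤ | ¬ zmem S z}

/-- `S` is symmetric: for every integer `z`, `z ∈ S` iff `F(S) - z ∉ S`. -/
def IsSymmetric (S : Set ℕ) : Prop := ∀ z : ℤ, zmem S z ↔ ¬ zmem S (Frob S - z)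

/-- the set of maximal elements of `Ap S x` with respect to the order
`u ⪯ v` iff `v = u + z` for some `z ∈ S`. -/
def MaxAp (S : Set ℕ) (x : ℕ) : Set ℕ :=
  {w : ℕ | w ∈ Ap S x ∧ ∀ y ∈ Ap S x, (∃ z ∈ S, y = w + z) → y = w}

/-- the set of maximal elements of `Ap S x` with respect to the order
`u ⪯_M v` iff `v = u + z` for some `z ∈ S` with `ord(v) = ord(u) + ord(z)`. -/
def MaxMAp (S : Set ℕ) (x : ℕ) : Set ℕ :=
  {w : ℕ | w ∈ Ap S x ∧ ∀ y ∈ Ap S x,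
    (∃ z ∈ S, y = w + z ∧ ordS S y = ordS S w + ordS S z) → y = w}

/-- `S` is M-pure with respect to `x` : all maximal elements of `Ap S x`
under `⪯_M` have the same order. -/
def MPureWrt (S : Set ℕ) (x : ℕ) : Prop :=
  ∀ w ∈ MaxMAp S x, ∀ w' ∈ MaxMAp S x, ordS S w = ordS S w'

/-- `S` is M-pure : it is M-pure with respect to its multiplicity. -/
def MPure (S : Set ℕ) : Prop := MPureWrt S (mult S)

/-- `β_i(x)` : the number of elements of `Ap S x` of order `i`. -/
noncomputable def betaS (S : Set ℕ) (x i : ℕ) : ℕ := {w ∈ Ap S x | ordS S w = i}.ncard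

/-- `d(x)` : the maximal order of an element of `Ap S x`. -/
noncomputable def dS (S : Set ℕ) (x : ℕ) : ℕ := sSup (ordS S '' Ap S x)

/-- the reduction number of `S` : the least `r` with `(r+1)M = m(S) + rM`. -/
noncomputable def redNum (S : Set ℕ) : ℕ :=
  sInf {r : ℕ | nM S (r + 1) = (fun y => mult S + y) '' nM S r}

/-- `l_x(S) = max { ord(s+x) - ord(x) - ord(s) : s ∈ S, ord(s) ≤ r }`. -/
noncomputable def lS (S : Set ℕ) (x : ℕ) : ℕ :=
  sSup {t : ℕ | ∃ s ∈ S, ordS S s ≤ redNum S ∧ t = ordS S (s + x) - ordS S x - ordS S s}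

/-- the Hilbert function of `S`. -/
noncomputable def HilbS (S : Set ℕ) (t : ℕ) : ℕ := (nM S t \ nM S (t + 1)).ncard

/-- The data of a gluing `S = ⟨q m₁, …, q m_d, p n₁, …, p n_k⟩` of two numerical
semigroups `S₁ = ⟨m₁, …, m_d⟩` and `S₂ = ⟨n₁, …, n_k⟩`, minimally generated by
`m₁ < ⋯ < m_d` and `n₁ < ⋯ < n_k`, where `p ∈ S₁ \ {m₁, …, m_d}`,
`q ∈ S₂ \ {n₁, …, n_k}` and `gcd(p, q) = 1`. -/
structure Gluing where
  d : ℕ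
  k : ℕ
  hd : 0 < d
  hk : 0 < k
  m : Fin d → ℕ
  n : Fin k → ℕ
  p : ℕ
  q : ℕ
  hm : StrictMono m
  hn : StrictMono n
  hmin₁ : ∀ i, m i ∉ AddSubmonoid.closure (Set.range m \ {m i})
  hmin₂ : ∀ j, n j ∉ AddSubmonoid.closure (Set.range n \ {n j})
  hnum₁ : IsNumSgp (AddSubmonoid.closure (Set.range m) : Set ℕ)
  hnum₂ : IsNumSgp (AddSubmonoid.closure (Set.range n) : Set ℕ)
  hp : p ∈ AddSubmonoid.closure (Set.range m)
  hq : q ∈ AddSubmonoid.closure (Set.range n)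
  hpm : p ∉ Set.range m
  hqn : q ∉ Set.range n
  hpq : Nat.gcd p q = 1

/-- the numerical semigroup `S₁ = ⟨m₁, …, m_d⟩`. -/
def Gluing.S₁ (G : Gluing) : Set ℕ := (AddSubmonoid.closure (Set.range G.m) : Set ℕ)

/-- the numerical semigroup `S₂ = ⟨n₁, …, n_k⟩`. -/
def Gluing.S₂ (G : Gluing) : Set ℕ := (AddSubmonoid.closure (Set.range G.n) : Set ℕ)

/-- the glued numerical semigroup `S = ⟨q m₁, …, q m_d, p n₁, …, p n_k⟩`. -/
def Gluing.S (G : Gluing) : Set ℕ :=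
  (AddSubmonoid.closure
    ((fun x => G.q * x) '' Set.range G.m ∪ (fun x => G.p * x) '' Set.range G.n) : Set ℕ)

/-- the smallest generator `m₁` of `S₁`. -/
def Gluing.m₁ (G : Gluing) : ℕ := G.m ⟨0, G.hd⟩

/-- the smallest generator `n₁` of `S₂`. -/
def Gluing.n₁ (G : Gluing) : ℕ := G.n ⟨0, G.hk⟩

/-- the gluing is specific if `ord_{S₂}(q) + l_q(S₂) ≤ ord_{S₁}(p)`. -/
def Gluing.Specific (G : Gluing) : Prop := ordS G.S₂ G.q + lS G.S₂ G.q ≤ ordS G.S₁ G.p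

/-- the gluing is nice if `q = a n₁` for some `1 < a ≤ ord_{S₁}(p)`. -/
def Gluing.Nice (G : Gluing) : Prop := ∃ a : ℕ, 1 < a ∧ a ≤ ordS G.S₁ G.p ∧ G.q = a * G.n₁

/-- if `x ∈ S` is nonzero and `ord_S(x + jx) = ord_S(x) + ord_S(jx)`
for every `1 ≤ j ≤ e - 1` (i.e. `(t^x)*` is a non-zero-divisor on the initial forms
`(t^{jx})*`), then `x = ord_S(x)·e`, where `e = m(S)`. -/
theorem stmt1 (S : Set ℕ) (hS : IsNumSgp S) (x : ℕ) (hx : x ∈ S) (hx0 : x ≠ 0)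
    (h : ∀ j : ℕ, 1 ≤ j → j ≤ mult S - 1 →
      ordS S (x + j * x) = ordS S x + ordS S (j * x)) :
    x = ordS S x * mult S := by
  set e := mult S with he
  have heS : e ∈ S ∧ e ≠ 0 := Nat.sInf_mem (⟨x, hx, hx0⟩ : {y : ℕ | y ∈ S ∧ y ≠ 0}.Nonempty)
  have he1 : 1 ≤ e := Nat.one_le_iff_ne_zero.mpr heS.2
  have hle : ∀ y ∈ S, y ≠ 0 → e ≤ y := fun y hy hy0 => Nat.sInf_le ⟨hy, hy0⟩
  -- every element of nM S t is at least t * e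
  have key : ∀ t s, s ∈ nM S t → t * e ≤ s := by
    intro t
    induction t with
    | zero => intro s _; simp
    | succ t ih =>
      intro s hs
      rcases hs with ⟨a, ha, b, hb, rfl⟩
      have ha' : e ≤ a := hle a ha.1 (by simpa using ha.2)
      have hb' : t * e ≤ b := ih b hb
      calc (t + 1) * e = t * e + e := by ring
        _ ≤ b + a := by omega
        _ = a + b := by ring
  have hbdd : ∀ s : ℕ, BddAbove {t : ℕ | s ∈ nM S t} := by
    intro s
    refine ⟨s, fun t ht => ?_⟩
    have h1 : t * e ≤ s := key t s ht
    have h2 : t ≤ t * e := Nat.le_mul_of_pos_right t he1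
    omega
  have ord_ge : ∀ s t : ℕ, s ∈ nM S t → t ≤ ordS S s := fun s t ht =>
    le_csSup (hbdd s) ht
  have ord_mem : ∀ s : ℕ, s ∈ S → s ∈ nM S (ordS S s) := by
    intro s hs
    have h0 : s ∈ nM S 0 := hs
    exact Nat.sSup_mem (⟨0, h0⟩ : {t : ℕ | s ∈ nM S t}.Nonempty) (hbdd s)
  -- e * k ∈ nM S k
  have hek : ∀ k : ℕ, e * k ∈ nM S k := by
    intro k
    induction k with
    | zero => simpa [nM] using hS.1
    | succ k ih =>
      refine ⟨e, ⟨heS.1, by simpa using heS.2⟩, e * k, ih, by ring⟩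
  -- ord (j * x) = j * ord x for 1 ≤ j ≤ e
  have claim : ∀ j : ℕ, 1 ≤ j → j ≤ e → ordS S (j * x) = j * ordS S x := by
    intro j
    induction j with
    | zero => omega
    | succ j ih =>
      intro _ hje
      rcases Nat.eq_zero_or_pos j with rfl | hj
      · simp
      · have h1 := h j hj (by omega)
        have h2 : (j + 1) * x = x + j * x := by ring
        rw [h2, h1, ih hj (by omega)]
        ring
  have hx_le : ordS S x * e ≤ x := key (ordS S x) x (ord_mem x hx)
  have hxe : x ≤ ordS S (e * x) := ord_ge (e * x) x (hek x)
  rw [claim e he1 le_rfl] at hxe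
  have : x ≤ ordS S x * e := by rw [mul_comm]; exact hxe
  omega
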